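/- For every x > 0 one has the identity ∫_ℝ |∂_y ψ_{x,1}(y)|² dy = μ₁(x) ∫_ℝ |ψ_{x,1}(y)|² dy + 2, and consequently sup_{x>0} (∫_ℝ |∂_y ψ_{x,1}(y)|² dy) / (∫_ℝ |ψ_{x,1}(y)|² dy) < ∞, i.e. x ↦ ‖∂_y u_x‖²_{L²(ℝ)} is a bounded function of x, where u_x = ψ_{x,1}/‖ψ_{x,1}‖_{L²(ℝ)}. -/

import Mathlib

open Real MeasureTheory Set Filter

private lemma tail_Ioi_integrable {k : ℝ} (hk : 0 < k) (a : ℝ) :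
    IntegrableOn (fun y : ℝ => Real.exp (k * (a - y))) (Set.Ioi a) := by
  have h : IntegrableOn (fun y : ℝ => Real.exp (k * a) * Real.exp (-k * y)) (Set.Ioi a) :=
    (exp_neg_integrableOn_Ioi a hk).const_mul (Real.exp (k * a))
  refine h.congr_fun (fun y _ => ?_) measurableSet_Ioi
  dsimp only; rw [← Real.exp_add]; ring_nf

private lemma tail_Ioi_integral {k : ℝ} (hk : 0 < k) (a : ℝ) :
    ∫ y in Set.Ioi a, Real.exp (k * (a - y)) = 1 / k := by
  have hderiv : ∀ y ∈ Set.Ici a,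
      HasDerivAt (fun y : ℝ => -(Real.exp (k * (a - y)) / k)) (Real.exp (k * (a - y))) y := by
    intro y _
    have h1 : HasDerivAt (fun y : ℝ => k * (a - y)) (k * (-1)) y :=
      ((hasDerivAt_id y).const_sub a).const_mul k
    have h3 := (h1.exp.div_const k).neg
    refine h3.congr_deriv ?_
    field_simp
  have htend : Tendsto (fun y : ℝ => -(Real.exp (k * (a - y)) / k)) atTop (nhds 0) := by
    have h0 : Tendsto (fun y : ℝ => k * y) atTop atTop :=
      Tendsto.const_mul_atTop hk tendsto_id
    have h1 : Tendsto (fun y : ℝ => -(k * y) + k * a) atTop atBot :=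
      tendsto_atBot_add_const_right _ (k * a) (tendsto_neg_atTop_atBot.comp h0)
    have h2 : Tendsto (fun y : ℝ => k * (a - y)) atTop atBot := by
      refine h1.congr (fun y => by ring)
    have h3 := ((Real.tendsto_exp_atBot.comp h2).div_const k).neg
    simpa using h3
  have := integral_Ioi_of_hasDerivAt_of_tendsto' hderiv (tail_Ioi_integrable hk a) htend
  rw [this]; simp [hk.ne']

private lemma tail_Iic_integrable {k : ℝ} (hk : 0 < k) (a : ℝ) :
    IntegrableOn (fun y : ℝ => Real.exp (k * (y - a))) (Set.Iic a) := by
  rw [← Measure.map_neg_eq_self (volume : Measure ℝ)]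
  have m : MeasurableEmbedding fun x : ℝ => -x := (Homeomorph.neg ℝ).measurableEmbedding
  rw [m.integrableOn_map_iff]
  simp_rw [Function.comp_def, neg_preimage, neg_Iic]
  rw [integrableOn_Ici_iff_integrableOn_Ioi]
  refine (tail_Ioi_integrable hk (-a)).congr_fun (fun y _ => ?_) measurableSet_Ioi
  congr 1; ring

private lemma tail_Iic_integral {k : ℝ} (hk : 0 < k) (a : ℝ) :
    ∫ y in Set.Iic a, Real.exp (k * (y - a)) = 1 / k := by
  have h := integral_comp_neg_Iic a (fun y => Real.exp (k * ((-a) - y)))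
  rw [tail_Ioi_integral hk (-a)] at h
  rw [← h]
  refine setIntegral_congr_fun measurableSet_Iic (fun y _ => ?_)
  congr 1; ring

private lemma mid_cosh {l : ℝ} (hl : 0 < l) (b : ℝ) :
    ∫ y in (-b)..b, Real.cosh (l * y) ^ 2 = b + Real.sinh (2 * l * b) / (2 * l) := by
  have hderiv : ∀ y ∈ Set.uIcc (-b) b,
      HasDerivAt (fun y : ℝ => y / 2 + Real.sinh (2 * l * y) / (4 * l))
        (Real.cosh (l * y) ^ 2) y := by
    intro y _
    have h1 : HasDerivAt (fun y : ℝ => y / 2) (1 / 2) y := (hasDerivAt_id y).div_const 2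
    have h2 : HasDerivAt (fun y : ℝ => 2 * l * y) (2 * l) y := by
      simpa using (hasDerivAt_id y).const_mul (2 * l)
    have h3 := ((h2.sinh).div_const (4 * l))
    have h4 := h1.add h3
    refine h4.congr_deriv ?_; symm
    rw [show 2 * l * y = 2 * (l * y) by ring, Real.cosh_two_mul]
    have hcs := Real.cosh_sq (l * y)
    field_simp
    nlinarith [hcs]
  have hcont : IntervalIntegrable (fun y : ℝ => Real.cosh (l * y) ^ 2) volume (-b) b :=
    ((Real.continuous_cosh.comp (continuous_const.mul continuous_id)).pow 2).intervalIntegrable _ _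
  rw [intervalIntegral.integral_eq_sub_of_hasDerivAt hderiv hcont]
  rw [show 2 * l * (-b) = -(2 * l * b) by ring, Real.sinh_neg]
  ring

private lemma mid_sinh {l : ℝ} (hl : 0 < l) (b : ℝ) :
    ∫ y in (-b)..b, Real.sinh (l * y) ^ 2 = Real.sinh (2 * l * b) / (2 * l) - b := by
  have hderiv : ∀ y ∈ Set.uIcc (-b) b,
      HasDerivAt (fun y : ℝ => Real.sinh (2 * l * y) / (4 * l) - y / 2)
        (Real.sinh (l * y) ^ 2) y := by
    intro y _
    have h1 : HasDerivAt (fun y : ℝ => y / 2) (1 / 2) y := (hasDerivAt_id y).div_const 2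
    have h2 : HasDerivAt (fun y : ℝ => 2 * l * y) (2 * l) y := by
      simpa using (hasDerivAt_id y).const_mul (2 * l)
    have h3 := ((h2.sinh).div_const (4 * l))
    have h4 := h3.sub h1
    refine h4.congr_deriv ?_; symm
    rw [show 2 * l * y = 2 * (l * y) by ring, Real.cosh_two_mul]
    have := Real.cosh_sq (l * y)
    field_simp
    nlinarith [this]
  have hcont : IntervalIntegrable (fun y : ℝ => Real.sinh (l * y) ^ 2) volume (-b) b :=
    ((Real.continuous_sinh.comp (continuous_const.mul continuous_id)).pow 2).intervalIntegrable _ _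
  rw [intervalIntegral.integral_eq_sub_of_hasDerivAt hderiv hcont]
  rw [show 2 * l * (-b) = -(2 * l * b) by ring, Real.sinh_neg]
  ring

private lemma split3 {f : ℝ → ℝ} {a b : ℝ} (hab : a ≤ b)
    (h1 : IntegrableOn f (Set.Iic a)) (h2 : IntegrableOn f (Set.Ioc a b))
    (h3 : IntegrableOn f (Set.Ioi b)) :
    ∫ y, f y = (∫ y in Set.Iic a, f y) + (∫ y in Set.Ioc a b, f y)
      + (∫ y in Set.Ioi b, f y) := by
  have h12 : IntegrableOn f (Set.Iic b) := by
    rw [← Set.Iic_union_Ioc_eq_Iic hab]; exact h1.union h2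
  have e1 : ∫ y in Set.Iic b, f y = (∫ y in Set.Iic a, f y) + ∫ y in Set.Ioc a b, f y := by
    rw [← setIntegral_union (Set.Iic_disjoint_Ioc le_rfl) measurableSet_Ioc h1 h2,
      Set.Iic_union_Ioc_eq_Iic hab]
  have e2 : ∫ y, f y = (∫ y in Set.Iic b, f y) + ∫ y in Set.Ioi b, f y := by
    rw [← setIntegral_union (Set.Iic_disjoint_Ioi le_rfl) measurableSet_Ioi h12 h3,
      Set.Iic_union_Ioi, setIntegral_univ]
  rw [e2, e1]

set_option maxHeartbeats 2000000 in
theorem stmt_11 (lam1 : ℝ → ℝ)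
    (hlam1 : ∀ x : ℝ, 0 ≤ x → lam1 x ∈ Set.Ioc (1/2 : ℝ) 1 ∧
      (2 * lam1 x - 1) * Real.exp (2 * lam1 x * x) = 1)
    (ψ : ℝ → ℝ → ℝ)
    (hψ1 : ∀ x : ℝ, 0 < x → ∀ y : ℝ, y ≤ -x → ψ x y = Real.exp (lam1 x * (x + y)))
    (hψ2 : ∀ x : ℝ, 0 < x → ∀ y : ℝ, -x < y → y < x →
      ψ x y = Real.cosh (lam1 x * y) / Real.cosh (lam1 x * x))
    (hψ3 : ∀ x : ℝ, 0 < x → ∀ y : ℝ, x ≤ y → ψ x y = Real.exp (lam1 x * (x - y))) :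
    (∀ x : ℝ, 0 < x →
      (∫ y : ℝ, (deriv (ψ x) y) ^ 2)
        = (-(lam1 x) ^ 2) * (∫ y : ℝ, (ψ x y) ^ 2) + 2) ∧
    (∃ M : ℝ, ∀ x : ℝ, 0 < x →
      (∫ y : ℝ, (deriv (ψ x) y) ^ 2) / (∫ y : ℝ, (ψ x y) ^ 2) ≤ M) := by
  have key : ∀ x : ℝ, 0 < x →
      ((∫ y : ℝ, (deriv (ψ x) y) ^ 2)
        = (-(lam1 x) ^ 2) * (∫ y : ℝ, (ψ x y) ^ 2) + 2) ∧
      (1 ≤ ∫ y : ℝ, (ψ x y) ^ 2) := by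
    intro x hx
    obtain ⟨⟨hl2, hl1⟩, hcon⟩ := hlam1 x hx.le
    set l := lam1 x with hldef
    have hl0 : (0:ℝ) < l := lt_trans (by norm_num) hl2
    have h2l : (0:ℝ) < 2 * l := by linarith
    have hc : (0:ℝ) < Real.cosh (l * x) := Real.cosh_pos _
    set c := Real.cosh (l * x) with hcdef
    -- ψ agrees with middle formula on all of [-x, x]
    have hmid : ∀ y ∈ Set.Icc (-x) x, ψ x y = Real.cosh (l * y) / c := by
      intro y hy
      rcases eq_or_lt_of_le hy.1 with h | h
      · rw [← h, hψ1 x hx _ le_rfl]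
        rw [show l * (x + -x) = 0 by ring, Real.exp_zero, mul_neg, Real.cosh_neg, hcdef,
          div_self hc.ne']
      · rcases eq_or_lt_of_le hy.2 with h' | h'
        · rw [h', hψ3 x hx _ le_rfl]
          rw [show l * (x - x) = 0 by ring, Real.exp_zero, hcdef, div_self hc.ne']
        · exact hψ2 x hx y h h'
    -- tails for ψ²
    have hexpsq : ∀ t : ℝ, Real.exp t ^ 2 = Real.exp (2 * t) := by
      intro t; rw [sq, ← Real.exp_add]; ring_nf
    have hA1int : IntegrableOn (fun y => (ψ x y) ^ 2) (Set.Iic (-x)) := by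
      refine (tail_Iic_integrable h2l (-x)).congr_fun (fun y hy => ?_) measurableSet_Iic
      rw [hψ1 x hx y hy, hexpsq, ← hldef]; congr 1; ring
    have hA1 : ∫ y in Set.Iic (-x), (ψ x y) ^ 2 = 1 / (2 * l) := by
      rw [← tail_Iic_integral h2l (-x)]
      refine setIntegral_congr_fun measurableSet_Iic (fun y hy => ?_)
      rw [hψ1 x hx y hy, hexpsq, ← hldef]; congr 1; ring
    have hA3int : IntegrableOn (fun y => (ψ x y) ^ 2) (Set.Ioi x) := by
      refine (tail_Ioi_integrable h2l x).congr_fun (fun y hy => ?_) measurableSet_Ioi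
      rw [hψ3 x hx y (le_of_lt hy), hexpsq, ← hldef]; congr 1; ring
    have hA3 : ∫ y in Set.Ioi x, (ψ x y) ^ 2 = 1 / (2 * l) := by
      rw [← tail_Ioi_integral h2l x]
      refine setIntegral_congr_fun measurableSet_Ioi (fun y hy => ?_)
      rw [hψ3 x hx y (le_of_lt hy), hexpsq, ← hldef]; congr 1; ring
    -- middle for ψ²
    have hcontmid : Continuous fun y : ℝ => (Real.cosh (l * y) / c) ^ 2 :=
      ((Real.continuous_cosh.comp (continuous_const.mul continuous_id)).div_const c).pow 2
    have hA2int : IntegrableOn (fun y => (ψ x y) ^ 2) (Set.Ioc (-x) x) := by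
      refine (hcontmid.integrableOn_Ioc).congr_fun (fun y hy => ?_) measurableSet_Ioc
      rw [hmid y ⟨le_of_lt hy.1, hy.2⟩]
    have hA2 : ∫ y in Set.Ioc (-x) x, (ψ x y) ^ 2
        = (x + Real.sinh (2 * l * x) / (2 * l)) / c ^ 2 := by
      have e1 : ∫ y in Set.Ioc (-x) x, (ψ x y) ^ 2
          = ∫ y in Set.Ioc (-x) x, (Real.cosh (l * y) / c) ^ 2 :=
        setIntegral_congr_fun measurableSet_Ioc
          (fun y hy => by rw [hmid y ⟨le_of_lt hy.1, hy.2⟩])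
      rw [e1, ← intervalIntegral.integral_of_le (by linarith : -x ≤ x)]
      have e2 : ∀ y : ℝ, (Real.cosh (l * y) / c) ^ 2 = Real.cosh (l * y) ^ 2 / c ^ 2 := by
        intro y; rw [div_pow]
      simp_rw [e2]
      rw [intervalIntegral.integral_div, mid_cosh hl0 x]
    have hAeq := split3 (by linarith : -x ≤ x) hA1int hA2int hA3int
    rw [hA1, hA2, hA3] at hAeq
    -- derivative computation off the two bad points
    have hder1 : ∀ y ∈ Set.Iio (-x), deriv (ψ x) y = l * Real.exp (l * (x + y)) := by
      intro y hy
      have hEq : ψ x =ᶠ[nhds y] fun z => Real.exp (l * (x + z)) :=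
        eventually_of_mem (Iio_mem_nhds hy) (fun z hz => hψ1 x hx z (le_of_lt hz))
      rw [hEq.deriv_eq]
      have h1 : HasDerivAt (fun z : ℝ => Real.exp (l * (x + z)))
          (Real.exp (l * (x + y)) * (l * 1)) y :=
        (((hasDerivAt_id y).const_add x).const_mul l).exp
      rw [h1.deriv]; ring
    have hder2 : ∀ y ∈ Set.Ioo (-x) x, deriv (ψ x) y = l * Real.sinh (l * y) / c := by
      intro y hy
      have hEq : ψ x =ᶠ[nhds y] fun z => Real.cosh (l * z) / c :=
        eventually_of_mem (Ioo_mem_nhds hy.1 hy.2) (fun z hz => hψ2 x hx z hz.1 hz.2)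
      rw [hEq.deriv_eq]
      have h1 : HasDerivAt (fun z : ℝ => Real.cosh (l * z) / c)
          (Real.sinh (l * y) * (l * 1) / c) y :=
        (((hasDerivAt_id y).const_mul l).cosh).div_const c
      rw [h1.deriv]; ring
    have hder3 : ∀ y ∈ Set.Ioi x, deriv (ψ x) y = -(l * Real.exp (l * (x - y))) := by
      intro y hy
      have hEq : ψ x =ᶠ[nhds y] fun z => Real.exp (l * (x - z)) :=
        eventually_of_mem (Ioi_mem_nhds hy) (fun z hz => hψ3 x hx z (le_of_lt hz))
      rw [hEq.deriv_eq]
      have h1 : HasDerivAt (fun z : ℝ => Real.exp (l * (x - z)))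
          (Real.exp (l * (x - y)) * (l * (-1))) y :=
        (((hasDerivAt_id y).const_sub x).const_mul l).exp
      rw [h1.deriv]; ring
    -- tails for (deriv ψ)²
    have hB1int : IntegrableOn (fun y => (deriv (ψ x) y) ^ 2) (Set.Iic (-x)) := by
      rw [integrableOn_Iic_iff_integrableOn_Iio]
      have h0 : IntegrableOn (fun y : ℝ => l ^ 2 * Real.exp (2 * l * (y - (-x))))
          (Set.Iic (-x)) := (tail_Iic_integrable h2l (-x)).const_mul (l ^ 2)
      refine (h0.mono_set Iio_subset_Iic_self).congr_fun (fun y hy => ?_) measurableSet_Iio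
      rw [hder1 y hy, mul_pow, hexpsq]; congr 2; ring
    have hB1 : ∫ y in Set.Iic (-x), (deriv (ψ x) y) ^ 2 = l ^ 2 * (1 / (2 * l)) := by
      rw [integral_Iic_eq_integral_Iio]
      have e1 : ∫ y in Set.Iio (-x), (deriv (ψ x) y) ^ 2
          = ∫ y in Set.Iio (-x), l ^ 2 * Real.exp (2 * l * (y - (-x))) := by
        refine setIntegral_congr_fun measurableSet_Iio (fun y hy => ?_)
        rw [hder1 y hy, mul_pow, hexpsq]; congr 2; ring
      rw [e1, MeasureTheory.integral_const_mul, ← integral_Iic_eq_integral_Iio,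
        tail_Iic_integral h2l (-x)]
    have hB3int : IntegrableOn (fun y => (deriv (ψ x) y) ^ 2) (Set.Ioi x) := by
      have h0 : IntegrableOn (fun y : ℝ => l ^ 2 * Real.exp (2 * l * (x - y)))
          (Set.Ioi x) := (tail_Ioi_integrable h2l x).const_mul (l ^ 2)
      refine h0.congr_fun (fun y hy => ?_) measurableSet_Ioi
      rw [hder3 y hy, neg_sq, mul_pow, hexpsq]; congr 2; ring
    have hB3 : ∫ y in Set.Ioi x, (deriv (ψ x) y) ^ 2 = l ^ 2 * (1 / (2 * l)) := by
      have e1 : ∫ y in Set.Ioi x, (deriv (ψ x) y) ^ 2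
          = ∫ y in Set.Ioi x, l ^ 2 * Real.exp (2 * l * (x - y)) := by
        refine setIntegral_congr_fun measurableSet_Ioi (fun y hy => ?_)
        rw [hder3 y hy, neg_sq, mul_pow, hexpsq]; congr 2; ring
      rw [e1, MeasureTheory.integral_const_mul, tail_Ioi_integral h2l x]
    -- middle for (deriv ψ)²
    have hcontmid' : Continuous fun y : ℝ => (l * Real.sinh (l * y) / c) ^ 2 :=
      ((continuous_const.mul
        (Real.continuous_sinh.comp (continuous_const.mul continuous_id))).div_const c).pow 2
    have hB2int : IntegrableOn (fun y => (deriv (ψ x) y) ^ 2) (Set.Ioc (-x) x) := by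
      rw [integrableOn_Ioc_iff_integrableOn_Ioo]
      refine (hcontmid'.integrableOn_Ioc.mono_set Ioo_subset_Ioc_self).congr_fun
        (fun y hy => ?_) measurableSet_Ioo
      rw [hder2 y hy]
    have hB2 : ∫ y in Set.Ioc (-x) x, (deriv (ψ x) y) ^ 2
        = l ^ 2 * (Real.sinh (2 * l * x) / (2 * l) - x) / c ^ 2 := by
      rw [integral_Ioc_eq_integral_Ioo]
      have e1 : ∫ y in Set.Ioo (-x) x, (deriv (ψ x) y) ^ 2
          = ∫ y in Set.Ioo (-x) x, (l * Real.sinh (l * y) / c) ^ 2 :=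
        setIntegral_congr_fun measurableSet_Ioo (fun y hy => by rw [hder2 y hy])
      rw [e1, ← integral_Ioc_eq_integral_Ioo,
        ← intervalIntegral.integral_of_le (by linarith : -x ≤ x)]
      have e2 : ∀ y : ℝ, (l * Real.sinh (l * y) / c) ^ 2
          = l ^ 2 * Real.sinh (l * y) ^ 2 / c ^ 2 := by
        intro y; rw [div_pow, mul_pow]
      simp_rw [e2]
      rw [intervalIntegral.integral_div]
      have e3 : (∫ y in (-x)..x, l ^ 2 * Real.sinh (l * y) ^ 2)
          = l ^ 2 * ∫ y in (-x)..x, Real.sinh (l * y) ^ 2 :=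
        intervalIntegral.integral_const_mul _ _
      rw [e3, mid_sinh hl0 x]
    have hBeq := split3 (by linarith : -x ≤ x) hB1int hB2int hB3int
    rw [hB1, hB2, hB3] at hBeq
    -- key hyperbolic relation from the constraint
    have hst : l * Real.sinh (l * x) = (1 - l) * c := by
      rw [hcdef]
      have ht : Real.exp (2 * l * x) = Real.exp (l * x) ^ 2 := by
        rw [hexpsq]; congr 1; ring
      have hcon' : (2 * l - 1) * Real.exp (l * x) ^ 2 = 1 := by
        rw [← ht]; exact hcon
      have h0 : (0:ℝ) < Real.exp (l * x) := Real.exp_pos _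
      rw [Real.sinh_eq, Real.cosh_eq, Real.exp_neg]
      field_simp
      nlinarith [hcon', h0]
    have hsinh2 : Real.sinh (2 * l * x) = 2 * Real.sinh (l * x) * c := by
      rw [show 2 * l * x = 2 * (l * x) by ring, Real.sinh_two_mul, hcdef]
    have hsx : (0:ℝ) ≤ Real.sinh (l * x) := by
      have : (0:ℝ) < l * x := by positivity
      exact (Real.sinh_pos_iff.mpr this).le
    constructor
    · -- the identity
      have hs : Real.sinh (l * x) = (1 - l) * c / l := by
        rw [eq_div_iff hl0.ne']; linarith [hst]
      rw [hBeq, hAeq, hsinh2, hs]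
      field_simp
      ring
    · -- lower bound on the L² norm
      rw [hAeq]
      have hm : (0:ℝ) ≤ (x + Real.sinh (2 * l * x) / (2 * l)) / c ^ 2 := by
        have : (0:ℝ) ≤ Real.sinh (2 * l * x) := by rw [hsinh2]; positivity
        positivity
      have h1l : (1:ℝ) ≤ 1 / l := by
        rw [le_div_iff₀ hl0]; linarith
      have e4 : 1 / (2 * l) + 1 / (2 * l) = 1 / l := by
        rw [← add_div, eq_div_iff hl0.ne']
        field_simp
        norm_num
      linarith
  refine ⟨fun x hx => (key x hx).1, ⟨2, fun x hx => ?_⟩⟩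
  obtain ⟨hid, hA⟩ := key x hx
  have hApos : (0:ℝ) < ∫ y : ℝ, (ψ x y) ^ 2 := lt_of_lt_of_le one_pos hA
  rw [hid, div_le_iff₀ hApos]
  nlinarith [sq_nonneg (lam1 x), hA, hApos]
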